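/- Let F be a 2-form on ℝ^{1,3} (antisymmetric F_{μν}) and λ a 4-vector such that both ∇^ν F_{μν} = (1/2) ε_{μναβ} λ^ν F^{αβ} (covariant Beltrami equation) and F_α^μ ∇^ν F_{μν} = 0 hold at a point, with λ ≠ 0 at that point. Then ε^{μναβ} F_{μν} F_{αβ} = 0 at that point, i.e., E·B = 0 where E_i = F_{i0} and B_i = (1/2) ε_{ijk} F^{jk}. -/

import Mathlib

open MeasureTheory

/-- Partial derivative `∂_μ f` on `ℝ^{1,3}` (coordinates `Fin 4 → ℝ`). -/
noncomputable def pd4 (μ : Fin 4) (f : (Fin 4 → ℝ) → ℝ) (x : Fin 4 → ℝ) : ℝ :=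
  fderiv ℝ f x (Pi.single μ 1)

/-- Diagonal Minkowski metric of signature `(1,3)`: `η = diag(1,-1,-1,-1)`. -/
noncomputable def eta : Fin 4 → ℝ := ![1, -1, -1, -1]

/-- Levi-Civita symbol on four indices, `ε_{0123} = 1`. -/
noncomputable def eps4 (μ ν α β : Fin 4) : ℝ :=
  ((ν.val : ℝ) - μ.val) * ((α.val : ℝ) - μ.val) * ((β.val : ℝ) - μ.val) *
    ((α.val : ℝ) - ν.val) * ((β.val : ℝ) - ν.val) * ((β.val : ℝ) - α.val) / 12

/-- Levi-Civita symbol on three indices. -/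
noncomputable def eps3 (i j k : Fin 3) : ℝ :=
  ((j.val : ℝ) - i.val) * ((k.val : ℝ) - j.val) * ((k.val : ℝ) - i.val) / 2

set_option maxHeartbeats 1000000 in
/-- Pointwise consistency: if an antisymmetric `F_{μν}` and a covector `λ ≠ 0`
satisfy the covariant Beltrami equation `G_μ := ∇^ν F_{μν} = ½ ε_{μναβ} λ^ν F^{αβ}`
together with `F_α{}^μ G_μ = 0`, then `ε^{μναβ} F_{μν} F_{αβ} = 0`,
i.e. `E·B = 0` where `E_i = F_{i0}` and `B_i = ½ ε_{ijk} F^{jk}`. -/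
theorem stmt11 (F : Fin 4 → Fin 4 → ℝ) (hFa : ∀ μ ν, F μ ν = -F ν μ)
    (l G : Fin 4 → ℝ) (hl : l ≠ 0)
    (hBel : ∀ μ, G μ = (1/2) * ∑ ν, ∑ α, ∑ β,
      eps4 μ ν α β * (eta ν * l ν) * (eta α * eta β * F α β))
    (hFG : ∀ α, (∑ μ, F α μ * eta μ * G μ) = 0) :
    (∑ μ, ∑ ν, ∑ α, ∑ β, eps4 μ ν α β * F μ ν * F α β) = 0 ∧
    (∑ i : Fin 3, F i.succ 0 *
      ((1/2) * ∑ j, ∑ k, eps3 i j k * F j.succ k.succ)) = 0 := by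
  have e10 : F 1 0 = -F 0 1 := hFa 1 0
  have e20 : F 2 0 = -F 0 2 := hFa 2 0
  have e30 : F 3 0 = -F 0 3 := hFa 3 0
  have e21 : F 2 1 = -F 1 2 := hFa 2 1
  have e31 : F 3 1 = -F 1 3 := hFa 3 1
  have e32 : F 3 2 = -F 2 3 := hFa 3 2
  have h00 : F 0 0 = 0 := by have := hFa 0 0; linarith
  have h11 : F 1 1 = 0 := by have := hFa 1 1; linarith
  have h22 : F 2 2 = 0 := by have := hFa 2 2; linarith
  have h33 : F 3 3 = 0 := by have := hFa 3 3; linarith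
  have expand : ∀ μ : Fin 4, (∑ ν : Fin 4, F μ ν * eta ν * G ν) =
      F μ 0 * (1 / 2 * (-(l 1 * F 2 3) + l 1 * F 3 2 + (l 2 * F 1 3 + -(l 2 * F 3 1)) + (-(l 3 * F 1 2) + l 3 * F 2 1))) +
        -(F μ 1 * (1 / 2 * (-(l 0 * F 2 3) + l 0 * F 3 2 + (l 2 * F 0 3 + -(l 2 * F 3 0)) + (-(l 3 * F 0 2) + l 3 * F 2 0)))) +
        -(F μ 2 * (1 / 2 * (l 0 * F 1 3 + -(l 0 * F 3 1) + (-(l 1 * F 0 3) + l 1 * F 3 0) + (l 3 * F 0 1 + -(l 3 * F 1 0))))) +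
        -(F μ 3 * (1 / 2 * (-(l 0 * F 1 2) + l 0 * F 2 1 + (l 1 * F 0 2 + -(l 1 * F 2 0)) + (-(l 2 * F 0 1) + l 2 * F 1 0)))) := by
    intro μ
    simp only [Fin.sum_univ_four]
    rw [hBel 0, hBel 1, hBel 2, hBel 3]
    simp only [Fin.sum_univ_four, eps4, eta]
    norm_num [show (3:Fin 4).val = 3 from rfl, show (2:Fin 4).val = 2 from rfl,
      show (![1, -1, -1, -1] : Fin 4 → ℝ) 2 = -1 from rfl, show (![1, -1, -1, -1] : Fin 4 → ℝ) 3 = -1 from rfl]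
  have k0 := (expand 0) ▸ hFG 0
  have k1 := (expand 1) ▸ hFG 1
  have k2 := (expand 2) ▸ hFG 2
  have k3 := (expand 3) ▸ hFG 3
  simp only [e10, e20, e30, e21, e31, e32, h00, h11, h22, h33] at k0 k1 k2 k3
  have hs : F 0 1 * F 2 3 - F 0 2 * F 1 3 + F 0 3 * F 1 2 = 0 := by
    by_contra hs0
    apply hl
    funext μ
    fin_cases μ
    · have h : l 0 * (F 0 1 * F 2 3 - F 0 2 * F 1 3 + F 0 3 * F 1 2) = 0 := by
        linear_combination k0
      exact (mul_eq_zero.mp h).resolve_right hs0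
    · have h : l 1 * (F 0 1 * F 2 3 - F 0 2 * F 1 3 + F 0 3 * F 1 2) = 0 := by
        linear_combination k1
      exact (mul_eq_zero.mp h).resolve_right hs0
    · have h : l 2 * (F 0 1 * F 2 3 - F 0 2 * F 1 3 + F 0 3 * F 1 2) = 0 := by
        linear_combination k2
      exact (mul_eq_zero.mp h).resolve_right hs0
    · have h : l 3 * (F 0 1 * F 2 3 - F 0 2 * F 1 3 + F 0 3 * F 1 2) = 0 := by
        linear_combination k3
      exact (mul_eq_zero.mp h).resolve_right hs0
  constructor
  · simp only [Fin.sum_univ_four, eps4]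
    norm_num [show (3:Fin 4).val = 3 from rfl, show (2:Fin 4).val = 2 from rfl]
    simp only [e10, e20, e30, e21, e31, e32, h00, h11, h22, h33]
    linear_combination 8 * hs
  · simp only [Fin.sum_univ_three, eps3,
      show ((0:Fin 3).succ : Fin 4) = 1 from rfl,
      show ((1:Fin 3).succ : Fin 4) = 2 from rfl,
      show ((2:Fin 3).succ : Fin 4) = 3 from rfl]
    norm_num [show (2:Fin 3).val = 2 from rfl]
    simp only [e10, e20, e30, e21, e31, e32]
    linear_combination -hs
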